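/- Let g₁, g₂ ∈ SL(2,ℤ) with lower-left entries c₁, c₂ and with c₁₂ the lower-left entry of g₁g₂, all nonzero. For α₁ ∈ ℤ/c₁, α₂ ∈ ℤ/c₂, α ∈ ℤ/c₁₂, define I(α₁,α₂,α) = { n ∈ ℤ : n ≡ −c₁α + c₁₂α₁ (mod c₁₂c₁), n ≡ c₂d₁₂α − c₁₂d₂α₂ (mod c₁₂c₂) }, where d₂, d₁₂ are the lower-right entries of g₂, g₁g₂. Then every n ∈ I(α₁,α₂,α) satisfies n ≡ −c₁α₂ + d₁c₂α₁ (mod c₁c₂), where d₁ is the lower-right entry of g₁. -/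
import Mathlib

noncomputable section

/-- Lemma on the index sets `I_{g₁,g₂}(α₁,α₂,α)`: if
`n ≡ −c₁α + c₁₂α₁ (mod c₁₂c₁)` and `n ≡ c₂d₁₂α − c₁₂d₂α₂ (mod c₁₂c₂)`, then
`n ≡ −c₁α₂ + d₁c₂α₁ (mod c₁c₂)`.  Here `cᵢ, dᵢ` (resp. `c₁₂, d₁₂`) are the
bottom-row entries of `gᵢ` (resp. of `g₁g₂`), and `α₁, α₂, α` are integer
representatives of classes modulo `c₁`, `c₂`, `c₁₂`. -/
theorem stmt12 (g₁ g₂ : Matrix.SpecialLinearGroup (Fin 2) ℤ)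
    (c₁ d₁ c₂ d₂ c₁₂ d₁₂ : ℤ)
    (hc₁ : c₁ = g₁.1 1 0) (hd₁ : d₁ = g₁.1 1 1)
    (hc₂ : c₂ = g₂.1 1 0) (hd₂ : d₂ = g₂.1 1 1)
    (hc₁₂ : c₁₂ = (g₁ * g₂).1 1 0) (hd₁₂ : d₁₂ = (g₁ * g₂).1 1 1)
    (h₁ : c₁ ≠ 0) (h₂ : c₂ ≠ 0) (h₁₂ : c₁₂ ≠ 0)
    (α₁ α₂ α n : ℤ)
    (hn₁ : n ≡ -c₁ * α + c₁₂ * α₁ [ZMOD c₁₂ * c₁])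
    (hn₂ : n ≡ c₂ * d₁₂ * α - c₁₂ * d₂ * α₂ [ZMOD c₁₂ * c₂]) :
    n ≡ -c₁ * α₂ + d₁ * c₂ * α₁ [ZMOD c₁ * c₂] := by
  set a₂ : ℤ := g₂.1 0 0 with ha₂
  set b₂ : ℤ := g₂.1 0 1 with hb₂
  have hdet : a₂ * d₂ - b₂ * c₂ = 1 := by
    have := g₂.2
    rw [Matrix.det_fin_two] at this
    rw [hc₂, hd₂]; linarith
  have hcE : c₁₂ = c₁ * a₂ + d₁ * c₂ := by
    rw [hc₁₂, hc₁, hd₁, hc₂, ha₂]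
    simp [Matrix.SpecialLinearGroup.coe_mul, Matrix.mul_apply, Fin.sum_univ_two]
  have hdE : d₁₂ = c₁ * b₂ + d₁ * d₂ := by
    rw [hd₁₂, hc₁, hd₁, hd₂, hb₂]
    simp [Matrix.SpecialLinearGroup.coe_mul, Matrix.mul_apply, Fin.sum_univ_two]
  have Hkey : c₂ * d₁₂ - c₁₂ * d₂ = -c₁ := by
    linear_combination c₂ * hdE - d₂ * hcE - c₁ * hdet
  obtain ⟨k, hk⟩ := (Int.modEq_iff_dvd.mp hn₁)
  obtain ⟨m, hm⟩ := (Int.modEq_iff_dvd.mp hn₂)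
  -- hk : -c₁*α + c₁₂*α₁ - n = c₁₂*c₁*k, hm similarly
  have hC : d₂ * n = c₂ * d₁₂ * α₁ - c₁ * d₂ * α₂ - c₁ * c₂ * (d₁₂ * k + m) := by
    have h := mul_left_cancel₀ h₁₂
      (show c₁₂ * (d₂ * n)
          = c₁₂ * (c₂ * d₁₂ * α₁ - c₁ * d₂ * α₂ - c₁ * c₂ * (d₁₂ * k + m)) by
        linear_combination (-(c₂ * d₁₂)) * hk + (-c₁) * hm + (-n) * Hkey)
    exact h
  rw [Int.modEq_iff_dvd]
  refine ⟨a₂ * (d₁₂ * k + m) + b₂ * (α₂ - α) - b₂ * c₁₂ * k, ?_⟩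
  linear_combination (-a₂) * hC + (-(a₂ * c₂ * α₁)) * hdE + (-(b₂ * c₂)) * hk +
    (b₂ * c₂ * α₁) * hcE + (n + c₁ * α₂ - d₁ * c₂ * α₁) * hdet
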